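/- Fix τ > 2, let d₁,…,dₙ be i.i.d. copies of D, and let μ := E[D]. Then there exists a constant c' > 0 depending only on τ such that for all sufficiently large n: if 2 < τ < 3 then P(|Σᵢ₌₁ⁿ dᵢ − nμ| > nμ/2) ≤ c'·n^{−(τ−2)}; if τ = 3 then P(|Σᵢ₌₁ⁿ dᵢ − nμ| > nμ/2) ≤ c'·(log n)/n; and if τ > 3 then P(|Σᵢ₌₁ⁿ dᵢ − nμ| > nμ/2) ≤ c'/n. -/

import Mathlib

open MeasureTheory ProbabilityTheory

/-- The normalizing constant `C_τ = (∑_{j ≥ 3} j^{-τ})⁻¹` of the power-law distribution. -/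
noncomputable def Ctau (τ : ℝ) : ℝ := (∑' j : ℕ, if 3 ≤ j then (j : ℝ) ^ (-τ) else 0)⁻¹

section PLSAux
open Filter

lemma pls_tail_step {a x : ℝ} (ha : 0 < a) (hx : 1 ≤ x) :
    a * (x+1) ^ (-(a+1)) ≤ x ^ (-a) - (x+1) ^ (-a) := by
  have hx0 : (0:ℝ) < x := lt_of_lt_of_le one_pos hx
  have hx1 : (0:ℝ) < x + 1 := by linarith
  have hB : 1 + (a+1) * (1/x) ≤ (1 + 1/x) ^ (a+1) :=
    one_add_mul_self_le_rpow_one_add (le_trans (by norm_num) (by positivity : (0:ℝ) ≤ 1/x))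
      (by linarith)
  have hxa : x ^ (a+1) = x ^ a * x := by rw [Real.rpow_add hx0, Real.rpow_one]
  have hxb : (x+1) ^ (a+1) = (x+1) ^ a * (x+1) := by rw [Real.rpow_add hx1, Real.rpow_one]
  have h1 : (1 : ℝ) + 1/x = (x+1)/x := by field_simp
  have h3 : (1 + 1/x) ^ (a+1) = ((x+1) ^ a * (x+1)) / (x ^ a * x) := by
    rw [h1, Real.div_rpow (by linarith) hx0.le, hxa, hxb]
  have hA : (0:ℝ) < x ^ a := Real.rpow_pos_of_pos hx0 a
  have hBp : (0:ℝ) < (x+1) ^ a := Real.rpow_pos_of_pos hx1 a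
  have key : x ^ a * (x + (1+a)) ≤ (x+1) ^ a * (x+1) := by
    have h4 : (x ^ a * x) * (1 + (a+1) * (1/x)) ≤ (x ^ a * x) * ((1 + 1/x) ^ (a+1)) :=
      mul_le_mul_of_nonneg_left hB (by positivity)
    rw [h3] at h4
    calc x ^ a * (x + (1+a)) = (x ^ a * x) * (1 + (a+1) * (1/x)) := by field_simp; ring
    _ ≤ (x ^ a * x) * (((x+1) ^ a * (x+1)) / (x ^ a * x)) := h4
    _ = (x+1) ^ a * (x+1) := by field_simp
  rw [Real.rpow_neg hx0.le, Real.rpow_neg hx1.le, Real.rpow_neg hx1.le, hxb]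
  rw [show (x ^ a)⁻¹ - ((x+1) ^ a)⁻¹ = ((x+1) ^ a - x ^ a) / (x ^ a * (x+1) ^ a) by
    field_simp]
  rw [mul_inv_le_iff₀ (by positivity), div_mul_eq_mul_div, le_div_iff₀ (by positivity)]
  nlinarith [mul_le_mul_of_nonneg_left key hBp.le]

lemma pls_head_step {c x : ℝ} (hc0 : 0 < c) (hc1 : c < 1) (hx : 1 ≤ x) :
    c * x ^ (c - 1) ≤ x ^ c - (x - 1) ^ c := by
  have hx0 : (0:ℝ) < x := lt_of_lt_of_le one_pos hx
  have hs : -1 ≤ -(1/x) := by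
    have : 1/x ≤ 1 := by rw [div_le_one hx0]; exact hx
    linarith
  have hB : (1 + -(1/x)) ^ c ≤ 1 + c * (-(1/x)) :=
    rpow_one_add_le_one_add_mul_self hs hc0.le hc1.le
  have h1 : (1 : ℝ) + -(1/x) = (x-1)/x := by field_simp; ring
  have h2 : ((x-1)/x) ^ c = (x-1) ^ c / x ^ c := Real.div_rpow (by linarith) hx0.le c
  rw [h1, h2] at hB
  have hxc : (0:ℝ) < x ^ c := Real.rpow_pos_of_pos hx0 c
  have h3 : (x-1) ^ c ≤ x ^ c * (1 - c / x) := by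
    have := mul_le_mul_of_nonneg_left hB hxc.le
    rw [mul_div_cancel₀ _ (ne_of_gt hxc)] at this
    calc (x-1)^c ≤ x ^ c * (1 + c * (-(1/x))) := this
    _ = x ^ c * (1 - c / x) := by ring
  have h4 : x ^ c / x = x ^ (c - 1) := by
    rw [Real.rpow_sub hx0, Real.rpow_one]
  have h5 : x ^ c * (1 - c / x) = x ^ c - c * x ^ (c - 1) := by
    rw [← h4]; field_simp
  linarith [h3, h5]

lemma pls_log_step {x : ℝ} (hx : 2 ≤ x) :
    1 / x ≤ Real.log x - Real.log (x - 1) := by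
  have hx0 : (0:ℝ) < x := by linarith
  have hx1 : (0:ℝ) < x - 1 := by linarith
  have h := Real.log_le_sub_one_of_pos (show (0:ℝ) < (x-1)/x by positivity)
  rw [Real.log_div (ne_of_gt hx1) (ne_of_gt hx0)] at h
  have : (x-1)/x - 1 = -(1/x) := by field_simp; ring
  linarith [this ▸ h]

/-- telescoping tail bound -/
lemma pls_tail_tsum {a : ℝ} (ha : 0 < a) {m : ℕ} (hm : 1 ≤ m) :
    (∑' j : ℕ, ((m:ℝ) + 1 + j) ^ (-(a+1))) ≤ (m:ℝ) ^ (-a) / a := by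
  have hm1 : (1:ℝ) ≤ (m:ℝ) := by exact_mod_cast hm
  set F : ℕ → ℝ := fun j => ((m:ℝ) + j) ^ (-a) with hF
  set T : ℕ → ℝ := fun j => ((m:ℝ) + 1 + j) ^ (-(a+1)) with hT
  have hstep : ∀ j : ℕ, a * T j ≤ F j - F (j+1) := by
    intro j
    have hx : (1:ℝ) ≤ (m:ℝ) + j := le_add_of_le_of_nonneg hm1 (by positivity)
    have := pls_tail_step ha hx
    simp only [hT, hF]
    push_cast
    convert this using 3 <;> ring
  have hTnn : ∀ j, 0 ≤ T j := fun j => Real.rpow_nonneg (by positivity) _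
  have htendsto : Tendsto F atTop (nhds 0) := by
    have h1 : Tendsto (fun j : ℕ => (m:ℝ) + j) atTop atTop :=
      tendsto_atTop_add_const_left _ _ tendsto_natCast_atTop_atTop
    exact (tendsto_rpow_neg_atTop ha).comp h1
  have hTele : HasSum (fun j => F j - F (j+1)) (F 0) := by
    have hnn : ∀ j, 0 ≤ F j - F (j+1) := fun j =>
      le_trans (by positivity) (hstep j)
    rw [hasSum_iff_tendsto_nat_of_nonneg hnn]
    have : ∀ n : ℕ, ∑ i ∈ Finset.range n, (F i - F (i+1)) = F 0 - F n := by
      intro n; exact Finset.sum_range_sub' F n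
    simp only [this]
    simpa using tendsto_const_nhds.sub htendsto
  have hTsum : Summable (fun j => a * T j) :=
    Summable.of_nonneg_of_le (fun j => by positivity) hstep hTele.summable
  have hT2 : Summable T := by
    have := hTsum.mul_left a⁻¹
    simpa [← mul_assoc, inv_mul_cancel₀ (ne_of_gt ha)] using this
  have h5 : a * (∑' j, T j) ≤ F 0 := by
    rw [← tsum_mul_left]
    calc (∑' j, a * T j) ≤ ∑' j, (F j - F (j+1)) := Summable.tsum_le_tsum hstep hTsum hTele.summable
    _ = F 0 := hTele.tsum_eq
  have hF0 : F 0 = (m:ℝ) ^ (-a) := by simp [hF]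
  rw [le_div_iff₀ ha]
  rw [hF0] at h5; linarith

lemma pls_cast_shift (m : ℕ) (f : ℝ → ℝ) :
    (fun j : ℕ => f (((m+1+j : ℕ) : ℝ))) = fun j : ℕ => f ((m:ℝ) + 1 + j) := by
  funext j; congr 1; push_cast; ring

lemma pls_tail_summable {b : ℝ} (hb : b < -1) (m : ℕ) :
    Summable (fun j : ℕ => ((m+1+j : ℕ) : ℝ) ^ b) := by
  have h := (summable_nat_add_iff (f := fun k : ℕ => (k:ℝ) ^ b) (m+1)).mpr
    (Real.summable_nat_rpow.mpr hb)
  refine h.congr fun j => ?_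
  simp [Nat.add_comm]

lemma pls_head_sum {c : ℝ} (hc0 : 0 < c) (hc1 : c < 1) (n : ℕ) :
    ∑ k ∈ Finset.range (n+1), ((k:ℝ)) ^ (c-1) ≤ (n:ℝ) ^ c / c := by
  induction n with
  | zero =>
    simp [Real.zero_rpow (by linarith : c - 1 ≠ 0), Real.zero_rpow (ne_of_gt hc0)]
  | succ n ih =>
    rw [Finset.sum_range_succ]
    have hx : (1:ℝ) ≤ ((n:ℝ) + 1) := by linarith [show (0:ℝ) ≤ (n:ℝ) from Nat.cast_nonneg n]
    have h := pls_head_step hc0 hc1 hx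
    have hcast : ((n+1 : ℕ) : ℝ) = (n:ℝ) + 1 := by push_cast; ring
    rw [hcast]
    have : ((n:ℝ) + 1 - 1) = (n:ℝ) := by ring
    rw [this] at h
    have h2 : ((n:ℝ)+1) ^ (c-1) ≤ (((n:ℝ)+1) ^ c - (n:ℝ) ^ c) / c := by
      rw [le_div_iff₀ hc0]; linarith
    calc (∑ k ∈ Finset.range (n+1), ((k:ℝ)) ^ (c-1)) + ((n:ℝ)+1) ^ (c-1)
        ≤ (n:ℝ) ^ c / c + (((n:ℝ)+1) ^ c - (n:ℝ) ^ c) / c := add_le_add ih h2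
      _ = ((n:ℝ)+1) ^ c / c := by field_simp; ring

lemma pls_head_sum_log {n : ℕ} (hn : 1 ≤ n) :
    ∑ k ∈ Finset.range (n+1), ((k:ℝ)) ^ (-1 : ℝ) ≤ 1 + Real.log n := by
  induction n with
  | zero => omega
  | succ n ih =>
    rcases Nat.eq_or_lt_of_le hn with h1 | h2
    · simp [← h1]
      norm_num [Real.rpow_neg_one, Real.log_nonneg]
    · have hn1 : 1 ≤ n := by omega
      rw [Finset.sum_range_succ]
      have hx : (2:ℝ) ≤ ((n:ℝ) + 1) := by
        have : (1:ℝ) ≤ (n:ℝ) := by exact_mod_cast hn1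
        linarith
      have h := pls_log_step hx
      have hsimp : ((n:ℝ) + 1 - 1) = (n:ℝ) := by ring
      rw [hsimp] at h
      have hcast : ((n+1 : ℕ) : ℝ) = (n:ℝ) + 1 := by push_cast; ring
      rw [hcast, Real.rpow_neg_one]
      have : ((n:ℝ)+1)⁻¹ = 1/((n:ℝ)+1) := by rw [one_div]
      rw [this]
      linarith [ih hn1]

/-- Expectation of `g ∘ X` for an `ℕ`-valued random variable with given point masses. -/
lemma pls_integral_nat {Ω : Type} [MeasurableSpace Ω] (P : Measure Ω) [IsProbabilityMeasure P]
    (X : Ω → ℕ) (hX : Measurable X) (g : ℕ → ℝ) (p : ℕ → ℝ) (hp : ∀ k, 0 ≤ p k)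
    (hpk : ∀ k : ℕ, P {ω | X ω = k} = ENNReal.ofReal (p k))
    (hs : Summable (fun k => |g k| * p k)) :
    Integrable (fun ω => g (X ω)) P ∧ ∫ ω, g (X ω) ∂P = ∑' k, g k * p k := by
  have hgm : Measurable g := measurable_from_top
  have hν : ∀ k : ℕ, (P.map X) {k} = ENNReal.ofReal (p k) := by
    intro k
    rw [Measure.map_apply hX (measurableSet_singleton k)]
    exact hpk k
  have hint : Integrable g (P.map X) := by
    refine ⟨hgm.aestronglyMeasurable, ?_⟩
    rw [hasFiniteIntegral_iff_norm]
    calc ∫⁻ a, ENNReal.ofReal ‖g a‖ ∂(P.map X)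
        = ∑' k : ℕ, ENNReal.ofReal ‖g k‖ * (P.map X) {k} := lintegral_countable' _
      _ = ∑' k : ℕ, ENNReal.ofReal (|g k| * p k) := by
          refine tsum_congr fun k => ?_
          rw [hν k, Real.norm_eq_abs, ← ENNReal.ofReal_mul (abs_nonneg _)]
      _ = ENNReal.ofReal (∑' k, |g k| * p k) :=
          (ENNReal.ofReal_tsum_of_nonneg (fun k => mul_nonneg (abs_nonneg _) (hp k)) hs).symm
      _ < ⊤ := ENNReal.ofReal_lt_top
  have hci : Integrable (fun ω => g (X ω)) P :=
    (integrable_map_measure hgm.aestronglyMeasurable hX.aemeasurable).mp hint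
  refine ⟨hci, ?_⟩
  rw [← integral_map hX.aemeasurable hgm.aestronglyMeasurable,
    integral_countable' hint]
  refine tsum_congr fun k => ?_
  rw [measureReal_def, hν k, ENNReal.toReal_ofReal (hp k), smul_eq_mul, mul_comm]

/-- Tail probability of an `ℕ`-valued random variable. -/
lemma pls_tail_prob {Ω : Type} [MeasurableSpace Ω] (P : Measure Ω)
    (X : Ω → ℕ) (hX : Measurable X) (p : ℕ → ℝ) (hp : ∀ k, 0 ≤ p k)
    (hpk : ∀ k : ℕ, P {ω | X ω = k} = ENNReal.ofReal (p k))
    (hs : Summable p) (n : ℕ) :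
    P {ω | n < X ω} = ENNReal.ofReal (∑' j : ℕ, p (n+1+j)) := by
  have hpk' : ∀ k : ℕ, P (X ⁻¹' {k}) = ENNReal.ofReal (p k) := fun k => hpk k
  have hset : {ω | n < X ω} = ⋃ j : ℕ, X ⁻¹' {n+1+j} := by
    ext ω
    simp only [Set.mem_setOf_eq, Set.mem_iUnion, Set.mem_preimage, Set.mem_singleton_iff]
    constructor
    · intro h; exact ⟨X ω - (n+1), by omega⟩
    · rintro ⟨j, hj⟩; omega
  rw [hset, measure_iUnion ?_ (fun j => hX (measurableSet_singleton _))]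
  · rw [tsum_congr (fun j => hpk' (n+1+j))]
    rw [← ENNReal.ofReal_tsum_of_nonneg (fun j => hp _) ?_]
    · have := (summable_nat_add_iff (f := p) (n+1)).mpr hs
      refine this.congr fun j => ?_
      simp [Nat.add_comm]
  · intro i j hij
    simp only [Function.onFun, Set.disjoint_left]
    intro ω h1 h2
    simp only [Set.mem_preimage, Set.mem_singleton_iff] at h1 h2
    omega

lemma pls_shift_summable {p : ℕ → ℝ} (hs : Summable p) (m : ℕ) :
    Summable (fun j : ℕ => p (m+1+j)) := by
  have := (summable_nat_add_iff (f := p) (m+1)).mpr hs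
  refine this.congr fun j => ?_
  simp [Nat.add_comm]

end PLSAux

set_option maxHeartbeats 2000000 in
/-- Concentration of the total degree of `n` i.i.d. power-law degrees around its mean
`nμ`, with error probability `c' n^{−(τ−2)}` for `2 < τ < 3`, `c' (log n)/n` for `τ = 3`,
and `c'/n` for `τ > 3`. -/
theorem powerLaw_sum_concentration (τ : ℝ) (hτ : 2 < τ) :
    ∃ c' : ℝ, 0 < c' ∧ ∃ N : ℕ, ∀ n : ℕ, N ≤ n →
      ∀ (Ω : Type) (mΩ : MeasurableSpace Ω) (P : Measure Ω), IsProbabilityMeasure P →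
      ∀ d : ℕ → Ω → ℕ,
      (∀ i, Measurable (d i)) →
      iIndepFun d P →
      (∀ i, ∀ k : ℕ, k < 3 → P {ω | d i ω = k} = 0) →
      (∀ i, ∀ k : ℕ, 3 ≤ k →
          P {ω | d i ω = k} = ENNReal.ofReal (Ctau τ * (k : ℝ) ^ (-τ))) →
      ((τ < 3 →
          P {ω | n * (∫ ω', (d 0 ω' : ℝ) ∂P) / 2 <
              |(∑ i ∈ Finset.range n, (d i ω : ℝ)) - n * ∫ ω', (d 0 ω' : ℝ) ∂P|} ≤
            ENNReal.ofReal (c' * (n : ℝ) ^ (-(τ - 2)))) ∧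
       (τ = 3 →
          P {ω | n * (∫ ω', (d 0 ω' : ℝ) ∂P) / 2 <
              |(∑ i ∈ Finset.range n, (d i ω : ℝ)) - n * ∫ ω', (d 0 ω' : ℝ) ∂P|} ≤
            ENNReal.ofReal (c' * Real.log n / n)) ∧
       (3 < τ →
          P {ω | n * (∫ ω', (d 0 ω' : ℝ) ∂P) / 2 <
              |(∑ i ∈ Finset.range n, (d i ω : ℝ)) - n * ∫ ω', (d 0 ω' : ℝ) ∂P|} ≤
            ENNReal.ofReal (c' / n))) := by
  classical
  have hτ1 : (0:ℝ) < τ - 1 := by linarith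
  have hτ2 : (0:ℝ) < τ - 2 := by linarith
  set C0 := Ctau τ with hC0def
  have hsum_tau : Summable (fun j : ℕ => (j:ℝ) ^ (-τ)) :=
    Real.summable_nat_rpow.mpr (by linarith)
  have hZs : Summable (fun j : ℕ => if 3 ≤ j then (j:ℝ) ^ (-τ) else 0) := by
    refine Summable.of_nonneg_of_le (fun j => ?_) (fun j => ?_) hsum_tau
    · split
      · positivity
      · exact le_rfl
    · split
      · exact le_rfl
      · positivity
  have hZpos : (0:ℝ) < ∑' j : ℕ, if 3 ≤ j then (j:ℝ) ^ (-τ) else 0 := by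
    have hnn : ∀ j : ℕ, j ≠ 3 → 0 ≤ if 3 ≤ j then (j:ℝ) ^ (-τ) else 0 := by
      intro j _
      split
      · positivity
      · exact le_rfl
    have h2 := Summable.le_tsum hZs 3 hnn
    have h3 : (0:ℝ) < ((3:ℕ):ℝ) ^ (-τ) := Real.rpow_pos_of_pos (by norm_num) _
    simp only [le_refl, if_pos] at h2
    exact lt_of_lt_of_le h3 h2
  have hC0pos : 0 < C0 := by
    rw [hC0def, Ctau]; exact inv_pos.mpr hZpos
  set p : ℕ → ℝ := fun k => if 3 ≤ k then C0 * (k:ℝ) ^ (-τ) else 0 with hp_def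
  have hp0 : ∀ k, 0 ≤ p k := by
    intro k; rw [hp_def]; dsimp only; split
    · positivity
    · exact le_rfl
  have hple : ∀ k : ℕ, p k ≤ C0 * (k:ℝ) ^ (-τ) := by
    intro k; rw [hp_def]; dsimp only; split
    · exact le_rfl
    · positivity
  have hps : Summable p := Summable.of_nonneg_of_le hp0 hple (hsum_tau.mul_left C0)
  have hp1 : ∀ k : ℕ, (k:ℝ) * p k ≤ C0 * (k:ℝ) ^ (-(τ-1)) := by
    intro k
    rcases Nat.eq_zero_or_pos k with h | h
    · subst h
      simp only [Nat.cast_zero, zero_mul]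
      positivity
    · have hk0 : (0:ℝ) < k := by exact_mod_cast h
      calc (k:ℝ) * p k ≤ (k:ℝ) * (C0 * (k:ℝ) ^ (-τ)) :=
            mul_le_mul_of_nonneg_left (hple k) hk0.le
      _ = C0 * ((k:ℝ) ^ (1:ℝ) * (k:ℝ) ^ (-τ)) := by rw [Real.rpow_one]; ring
      _ = C0 * (k:ℝ) ^ (-(τ-1)) := by
          rw [← Real.rpow_add hk0, show (1:ℝ) + -τ = -(τ-1) by ring]
  have hp2 : ∀ k : ℕ, (k:ℝ)^2 * p k ≤ C0 * (k:ℝ) ^ (2-τ) := by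
    intro k
    rcases Nat.eq_zero_or_pos k with h | h
    · subst h
      simp only [Nat.cast_zero]
      rw [show ((0:ℝ))^2 = 0 by ring, zero_mul]
      positivity
    · have hk0 : (0:ℝ) < k := by exact_mod_cast h
      calc (k:ℝ)^2 * p k ≤ (k:ℝ)^2 * (C0 * (k:ℝ) ^ (-τ)) :=
            mul_le_mul_of_nonneg_left (hple k) (by positivity)
      _ = C0 * ((k:ℝ) ^ ((2:ℕ):ℝ) * (k:ℝ) ^ (-τ)) := by
          rw [Real.rpow_natCast]; ring
      _ = C0 * (k:ℝ) ^ (2-τ) := by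
          rw [← Real.rpow_add hk0, show (((2:ℕ):ℝ)) + -τ = 2-τ by push_cast; ring]
  have hs1 : Summable (fun k : ℕ => (k:ℝ) * p k) :=
    Summable.of_nonneg_of_le (fun k => mul_nonneg (Nat.cast_nonneg k) (hp0 k)) hp1
      ((Real.summable_nat_rpow.mpr (by linarith)).mul_left C0)
  set μlb : ℝ := 3 * (C0 * (3:ℝ) ^ (-τ)) with hμlb_def
  have hμlb_pos : 0 < μlb := by
    have : (0:ℝ) < (3:ℝ) ^ (-τ) := Real.rpow_pos_of_pos (by norm_num) _
    rw [hμlb_def]; positivity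
  set K1 : ℝ := C0 / (τ-1) with hK1_def
  set K2 : ℝ := C0 / (τ-2) with hK2_def
  have hK1pos : 0 < K1 := by rw [hK1_def]; positivity
  have hK2pos : 0 < K2 := by rw [hK2_def]; positivity
  set Z2 : ℝ := ∑' k : ℕ, (k:ℝ) ^ (2-τ) with hZ2_def
  -- tail bounds
  have htailP : ∀ m : ℕ, 1 ≤ m → (∑' j : ℕ, p (m+1+j)) ≤ K1 * (m:ℝ) ^ (-(τ-1)) := by
    intro m hm
    have hshift : Summable (fun j : ℕ => ((m+1+j : ℕ):ℝ) ^ (-τ)) :=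
      pls_tail_summable (by linarith) m
    calc (∑' j, p (m+1+j)) ≤ ∑' j, C0 * ((m+1+j : ℕ):ℝ) ^ (-τ) :=
          Summable.tsum_le_tsum (fun j => hple _) (pls_shift_summable hps m) (hshift.mul_left C0)
    _ = C0 * ∑' j, ((m+1+j : ℕ):ℝ) ^ (-τ) := tsum_mul_left
    _ ≤ C0 * ((m:ℝ) ^ (-(τ-1)) / (τ-1)) := by
        refine mul_le_mul_of_nonneg_left ?_ hC0pos.le
        have h := pls_tail_tsum (a := τ-1) (by linarith) hm
        have hcast : (fun j : ℕ => ((m+1+j : ℕ):ℝ) ^ (-τ))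
            = fun j : ℕ => ((m:ℝ) + 1 + j) ^ (-((τ-1)+1)) := by
          funext j
          rw [show -((τ-1)+1) = -τ by ring]
          congr 1
          push_cast; ring
        rw [hcast]
        exact h
    _ = K1 * (m:ℝ) ^ (-(τ-1)) := by rw [hK1_def]; ring
  have htailE : ∀ m : ℕ, 1 ≤ m →
      (∑' j : ℕ, ((m+1+j : ℕ):ℝ) * p (m+1+j)) ≤ K2 * (m:ℝ) ^ (-(τ-2)) := by
    intro m hm
    have hshift : Summable (fun j : ℕ => ((m+1+j : ℕ):ℝ) ^ (-(τ-1))) :=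
      pls_tail_summable (by linarith) m
    calc (∑' j, ((m+1+j : ℕ):ℝ) * p (m+1+j))
        ≤ ∑' j, C0 * ((m+1+j : ℕ):ℝ) ^ (-(τ-1)) :=
          Summable.tsum_le_tsum (fun j => hp1 _) (pls_shift_summable hs1 m) (hshift.mul_left C0)
    _ = C0 * ∑' j, ((m+1+j : ℕ):ℝ) ^ (-(τ-1)) := tsum_mul_left
    _ ≤ C0 * ((m:ℝ) ^ (-(τ-2)) / (τ-2)) := by
        refine mul_le_mul_of_nonneg_left ?_ hC0pos.le
        have h := pls_tail_tsum (a := τ-2) (by linarith) hm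
        have hcast : (fun j : ℕ => ((m+1+j : ℕ):ℝ) ^ (-(τ-1)))
            = fun j : ℕ => ((m:ℝ) + 1 + j) ^ (-((τ-2)+1)) := by
          funext j
          rw [show -((τ-2)+1) = -(τ-1) by ring]
          congr 1
          push_cast; ring
        rw [hcast]
        exact h
    _ = K2 * (m:ℝ) ^ (-(τ-2)) := by rw [hK2_def]; ring
  have hhead : ∀ n : ℕ, (∑ k ∈ Finset.range (n+1), (k:ℝ)^2 * p k)
      ≤ C0 * ∑ k ∈ Finset.range (n+1), (k:ℝ) ^ (2-τ) := by
    intro n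
    rw [Finset.mul_sum]
    exact Finset.sum_le_sum fun k _ => hp2 k
  -- choice of N
  have hNev : ∀ᶠ n : ℕ in Filter.atTop, K2 * (n:ℝ) ^ (-(τ-2)) < μlb/4 := by
    have h0 : Filter.Tendsto (fun n : ℕ => K2 * (n:ℝ) ^ (-(τ-2))) Filter.atTop
        (nhds (K2 * 0)) :=
      Filter.Tendsto.const_mul K2
        ((tendsto_rpow_neg_atTop hτ2).comp tendsto_natCast_atTop_atTop)
    rw [mul_zero] at h0
    exact h0.eventually (gt_mem_nhds (by positivity))
  obtain ⟨N0, hN0⟩ := Filter.eventually_atTop.mp (hNev.and (Filter.eventually_ge_atTop 3))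
  -- the constant
  set cA : ℝ := K1 + 16 * (C0/(3-τ) + K1) / μlb^2 with hcA_def
  set cB : ℝ := K1 + 16 * (2*C0 + K1) / μlb^2 with hcB_def
  set cC : ℝ := K1 + 16 * (C0*Z2 + K1) / μlb^2 with hcC_def
  have hcBpos : 0 < cB := by
    rw [hcB_def]; positivity
  refine ⟨max cA (max cB cC), lt_of_lt_of_le hcBpos (le_trans (le_max_left _ _)
    (le_max_right _ _)), N0, ?_⟩
  intro n hn Ω mΩ P hP d hmeas hindep hlow hpmf
  obtain ⟨hsmall, hn3⟩ := hN0 n hn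
  have hn1 : 1 ≤ n := by omega
  have hn3R : (3:ℝ) ≤ (n:ℝ) := by exact_mod_cast hn3
  have hn0R : (0:ℝ) < n := by linarith
  have hn1R : (1:ℝ) ≤ (n:ℝ) := by linarith
  -- point masses
  have hpk : ∀ i, ∀ k : ℕ, P {ω | d i ω = k} = ENNReal.ofReal (p k) := by
    intro i k
    by_cases h3 : 3 ≤ k
    · rw [hpmf i k h3, hp_def]
      simp only [h3, if_true]
    · rw [hlow i k (by omega), hp_def]
      simp only [h3, if_false, ENNReal.ofReal_zero]
  -- the mean
  have hsabs : Summable (fun k : ℕ => |((k:ℕ):ℝ)| * p k) := by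
    refine hs1.congr fun k => ?_
    rw [abs_of_nonneg (Nat.cast_nonneg k)]
  obtain ⟨hμint, hμeq⟩ :=
    pls_integral_nat P (d 0) (hmeas 0) (fun k => (k:ℝ)) p hp0 (hpk 0) hsabs
  set μ := ∫ ω', ((d 0 ω' : ℕ) : ℝ) ∂P with hμ_def
  have hμ3 : μlb ≤ μ := by
    rw [hμ_def]
    rw [show (∫ ω', ((d 0 ω' : ℕ) : ℝ) ∂P) = ∑' k : ℕ, (k:ℝ) * p k from hμeq]
    have h2 := Summable.le_tsum hs1 3 (fun j _ => mul_nonneg (Nat.cast_nonneg j) (hp0 j))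
    have h3 : ((3:ℕ):ℝ) * p 3 = μlb := by
      rw [hp_def, hμlb_def]
      norm_num
    rw [h3] at h2
    exact h2
  have hμpos : 0 < μ := lt_of_lt_of_le hμlb_pos hμ3
  -- truncated variables
  set g1 : ℕ → ℝ := fun k => ((min k n : ℕ) : ℝ) with hg1_def
  set g2 : ℕ → ℝ := fun k => (g1 k)^2 with hg2_def
  have hg1nn : ∀ k, 0 ≤ g1 k := fun k => Nat.cast_nonneg _
  have hg1lek : ∀ k : ℕ, g1 k ≤ (k:ℝ) := by
    intro k; simp only [hg1_def]; exact_mod_cast Nat.min_le_left k n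
  have hg1len : ∀ k : ℕ, g1 k ≤ (n:ℝ) := by
    intro k; simp only [hg1_def]; exact_mod_cast Nat.min_le_right k n
  have hsg1 : Summable (fun k => g1 k * p k) :=
    Summable.of_nonneg_of_le (fun k => mul_nonneg (hg1nn k) (hp0 k))
      (fun k => mul_le_mul_of_nonneg_right (hg1lek k) (hp0 k)) hs1
  have hsg1abs : Summable (fun k => |g1 k| * p k) := by
    refine hsg1.congr fun k => ?_
    rw [abs_of_nonneg (hg1nn k)]
  have hsg2 : Summable (fun k => g2 k * p k) := by
    refine Summable.of_nonneg_of_le (fun k => mul_nonneg (by rw [hg2_def]; positivity) (hp0 k))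
      (fun k => ?_) (hps.mul_left ((n:ℝ)^2))
    refine mul_le_mul_of_nonneg_right ?_ (hp0 k)
    rw [hg2_def]
    exact pow_le_pow_left₀ (hg1nn k) (hg1len k) 2
  have hsg2abs : Summable (fun k => |g2 k| * p k) := by
    refine hsg2.congr fun k => ?_
    rw [abs_of_nonneg (by rw [hg2_def]; positivity)]
  have hY := fun i => pls_integral_nat P (d i) (hmeas i) g1 p hp0 (hpk i) hsg1abs
  have hY2 := fun i => pls_integral_nat P (d i) (hmeas i) g2 p hp0 (hpk i) hsg2abs
  set m1 : ℝ := ∑' k, g1 k * p k with hm1_def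
  set m2 : ℝ := ∑' k, g2 k * p k with hm2_def
  have hm2nn : 0 ≤ m2 := tsum_nonneg fun k => mul_nonneg (by rw [hg2_def]; positivity) (hp0 k)
  -- mean shift
  have hsubsum : Summable (fun k : ℕ => ((k:ℝ) - g1 k) * p k) := by
    have := hs1.sub hsg1
    refine this.congr fun k => ?_
    ring
  have hsub : μ - m1 = ∑' k : ℕ, ((k:ℝ) - g1 k) * p k := by
    rw [hμ_def, show (∫ ω', ((d 0 ω' : ℕ) : ℝ) ∂P) = ∑' k : ℕ, (k:ℝ) * p k from hμeq,
      hm1_def, ← Summable.tsum_sub hs1 hsg1]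
    exact tsum_congr fun k => by ring
  have hshift_le : μ - m1 ≤ K2 * (n:ℝ) ^ (-(τ-2)) := by
    rw [hsub, ← Summable.sum_add_tsum_nat_add (n+1) hsubsum]
    have hzero : (∑ k ∈ Finset.range (n+1), (((k:ℕ):ℝ) - g1 k) * p k) = 0 := by
      refine Finset.sum_eq_zero fun k hk => ?_
      have hkn : k ≤ n := Nat.lt_succ_iff.mp (Finset.mem_range.mp hk)
      have : g1 k = (k:ℝ) := by rw [hg1_def]; simp [Nat.min_eq_left hkn]
      rw [this]; ring
    rw [hzero, zero_add]
    have hidx : ∀ j : ℕ, j + (n+1) = n+1+j := fun j => Nat.add_comm _ _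
    calc (∑' j : ℕ, (((j + (n+1) : ℕ):ℝ) - g1 (j + (n+1))) * p (j + (n+1)))
        ≤ ∑' j : ℕ, ((n+1+j : ℕ):ℝ) * p (n+1+j) := by
          refine Summable.tsum_le_tsum (fun j => ?_) ?_ (pls_shift_summable hs1 n)
          · rw [hidx j]
            exact mul_le_mul_of_nonneg_right (sub_le_self _ (hg1nn _)) (hp0 _)
          · have := pls_shift_summable hsubsum n
            refine this.congr fun j => ?_
            rw [hidx j]
      _ ≤ K2 * (n:ℝ) ^ (-(τ-2)) := htailE n hn1
  have hm1leμ : m1 ≤ μ := by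
    have : 0 ≤ μ - m1 := by
      rw [hsub]
      exact tsum_nonneg fun k => mul_nonneg (by linarith [hg1lek k]) (hp0 k)
    linarith
  have hshift4 : μ - m1 ≤ μ/4 := by
    have h1 : K2 * (n:ℝ) ^ (-(τ-2)) < μlb/4 := hsmall
    have h2 : μlb/4 ≤ μ/4 := by linarith
    linarith
  -- second moment bound
  have hm2_le : m2 ≤ C0 * (∑ k ∈ Finset.range (n+1), (k:ℝ) ^ (2-τ))
      + (n:ℝ)^2 * (K1 * (n:ℝ) ^ (-(τ-1))) := by
    rw [hm2_def, ← Summable.sum_add_tsum_nat_add (n+1) hsg2]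
    refine add_le_add ?_ ?_
    · refine le_trans (Finset.sum_le_sum fun k _ => ?_) (hhead n)
      refine mul_le_mul_of_nonneg_right ?_ (hp0 k)
      rw [hg2_def]
      exact pow_le_pow_left₀ (hg1nn k) (hg1lek k) 2
    · have heq : ∀ j : ℕ, g2 (j + (n+1)) * p (j + (n+1)) = (n:ℝ)^2 * p (n+1+j) := by
        intro j
        have hmin : min (j + (n+1)) n = n := Nat.min_eq_right (by omega)
        rw [hg2_def, hg1_def]
        dsimp only
        rw [hmin, Nat.add_comm j (n+1)]
      rw [tsum_congr heq, tsum_mul_left]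
      exact mul_le_mul_of_nonneg_left (htailP n hn1) (by positivity)
  -- the truncated random variables
  set Y : ℕ → Ω → ℝ := fun i => g1 ∘ d i with hY_def
  have hYaesm : ∀ i, AEStronglyMeasurable (Y i) P := fun i =>
    ((measurable_from_top (f := g1)).comp (hmeas i)).aestronglyMeasurable
  have hYmem : ∀ i, MemLp (Y i) 2 P := by
    intro i
    refine MemLp.mono_exponent ?_ (le_top : (2:ENNReal) ≤ ⊤)
    refine memLp_top_of_bound (hYaesm i) (n:ℝ) (Filter.Eventually.of_forall fun ω => ?_)
    rw [hY_def]
    simp only [Function.comp_apply, Real.norm_eq_abs]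
    rw [abs_of_nonneg (hg1nn _)]
    exact hg1len _
  have hYindep : iIndepFun Y P :=
    hindep.comp (fun _ => g1) (fun _ => measurable_from_top)
  set S : Ω → ℝ := ∑ i ∈ Finset.range n, Y i with hS_def
  have hSmem : MemLp S 2 P := memLp_finset_sum' _ fun i _ => hYmem i
  have hYint : ∀ i, ∫ ω, Y i ω ∂P = m1 := fun i => (hY i).2
  have hES : (∫ ω, S ω ∂P) = n * m1 := by
    rw [hS_def]
    have h1 : (∫ ω, (∑ i ∈ Finset.range n, Y i) ω ∂P)
        = ∑ i ∈ Finset.range n, ∫ ω, Y i ω ∂P := by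
      simp only [Finset.sum_apply]
      exact integral_finset_sum _ fun i _ => (hY i).1
    rw [h1]
    rw [Finset.sum_congr rfl fun i _ => hYint i, Finset.sum_const, Finset.card_range,
      nsmul_eq_mul]
  have hVarY : ∀ i, variance (Y i) P ≤ m2 := by
    intro i
    refine le_trans (variance_le_expectation_sq (hYaesm i)) ?_
    have h2 := (hY2 i).2
    have h3 : (∫ ω, ((Y i) ^ 2) ω ∂P) = ∫ ω, g2 (d i ω) ∂P := by
      refine integral_congr_ae (Filter.Eventually.of_forall fun ω => ?_)
      simp [hY_def, hg2_def, Pi.pow_apply]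
    calc (∫ ω, ((Y i) ^ 2) ω ∂P) = ∫ ω, g2 (d i ω) ∂P := h3
    _ ≤ m2 := le_of_eq (by rw [h2]; try rw [hm2_def])
  have hpair : Set.Pairwise ↑(Finset.range n) fun i j => IndepFun (Y i) (Y j) P :=
    fun i _ j _ hij => hYindep.indepFun hij
  have hVarS : variance S P ≤ n * m2 := by
    rw [hS_def, IndepFun.variance_sum (fun i _ => hYmem i) hpair]
    calc (∑ i ∈ Finset.range n, variance (Y i) P) ≤ ∑ _i ∈ Finset.range n, m2 :=
          Finset.sum_le_sum fun i _ => hVarY i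
    _ = n * m2 := by rw [Finset.sum_const, Finset.card_range, nsmul_eq_mul]
  -- Chebyshev
  have hc4 : (0:ℝ) < (n:ℝ) * μ / 4 := by positivity
  have hcheb := meas_ge_le_variance_div_sq (X := S) hSmem hc4
  -- tail event
  have htail_prob : ∀ i, P {ω | n < d i ω} = ENNReal.ofReal (∑' j : ℕ, p (n+1+j)) :=
    fun i => pls_tail_prob P (d i) (hmeas i) p hp0 (hpk i) hps n
  set tP : ℝ := ∑' j : ℕ, p (n+1+j) with htP_def
  have htPnn : 0 ≤ tP := tsum_nonneg fun j => hp0 _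
  -- event inclusion
  have hincl : {ω | (n:ℝ) * μ / 2 < |(∑ i ∈ Finset.range n, ((d i ω : ℕ):ℝ)) - n * μ|}
      ⊆ (⋃ i ∈ Finset.range n, {ω | n < d i ω})
        ∪ {ω | (n:ℝ) * μ / 4 ≤ |S ω - ∫ ω', S ω' ∂P|} := by
    intro ω hω
    by_cases hB : ω ∈ ⋃ i ∈ Finset.range n, {ω | n < d i ω}
    · exact Or.inl hB
    · refine Or.inr ?_
      simp only [Set.mem_iUnion, Set.mem_setOf_eq, not_exists, exists_prop, not_and,
        not_lt] at hB
      have hSω : S ω = ∑ i ∈ Finset.range n, ((d i ω : ℕ):ℝ) := by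
        rw [hS_def]
        rw [Finset.sum_apply]
        refine Finset.sum_congr rfl fun i hi => ?_
        have hle : d i ω ≤ n := hB i hi
        rw [hY_def]
        simp only [Function.comp_apply]
        rw [hg1_def]
        simp [Nat.min_eq_left hle]
      simp only [Set.mem_setOf_eq] at hω ⊢
      rw [hES, hSω]
      have habs : |(∑ i ∈ Finset.range n, ((d i ω : ℕ):ℝ)) - n * m1|
          ≥ |(∑ i ∈ Finset.range n, ((d i ω : ℕ):ℝ)) - n * μ| - |(n:ℝ) * μ - n * m1| := by
        have := abs_sub_abs_le_abs_sub
          ((∑ i ∈ Finset.range n, ((d i ω : ℕ):ℝ)) - n * μ)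
          ((n:ℝ) * m1 - n * μ)
        have heq1 : ((∑ i ∈ Finset.range n, ((d i ω : ℕ):ℝ)) - n * μ)
            - ((n:ℝ) * m1 - n * μ) = (∑ i ∈ Finset.range n, ((d i ω : ℕ):ℝ)) - n * m1 := by
          ring
        rw [heq1] at this
        have heq2 : |(n:ℝ) * m1 - n * μ| = |(n:ℝ) * μ - n * m1| := abs_sub_comm _ _
        linarith [this, heq2.le]
      have hmul1 := mul_le_mul_of_nonneg_left hm1leμ hn0R.le
      have hmul2 := mul_le_mul_of_nonneg_left hshift4 hn0R.le
      have hμm1 : |(n:ℝ) * μ - n * m1| ≤ (n:ℝ) * μ / 4 := by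
        rw [abs_of_nonneg (by linarith)]
        rw [mul_sub] at hmul2
        linarith
      linarith [habs, hμm1, hω]
  -- putting the probability bound together
  have hPB : P (⋃ i ∈ Finset.range n, {ω | n < d i ω}) ≤ ENNReal.ofReal ((n:ℝ) * tP) := by
    calc P (⋃ i ∈ Finset.range n, {ω | n < d i ω})
        ≤ ∑ i ∈ Finset.range n, P {ω | n < d i ω} := measure_biUnion_finset_le _ _
    _ = ∑ _i ∈ Finset.range n, ENNReal.ofReal tP := Finset.sum_congr rfl fun i _ => htail_prob i
    _ = (n:ℕ) • ENNReal.ofReal tP := by rw [Finset.sum_const, Finset.card_range]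
    _ = ENNReal.ofReal ((n:ℝ) * tP) := by
        rw [nsmul_eq_mul, ← ENNReal.ofReal_natCast n, ← ENNReal.ofReal_mul (Nat.cast_nonneg n)]
  have hmain : P {ω | (n:ℝ) * μ / 2 < |(∑ i ∈ Finset.range n, ((d i ω : ℕ):ℝ)) - n * μ|}
      ≤ ENNReal.ofReal ((n:ℝ) * tP + variance S P / ((n:ℝ) * μ / 4)^2) := by
    calc P {ω | (n:ℝ) * μ / 2 < |(∑ i ∈ Finset.range n, ((d i ω : ℕ):ℝ)) - n * μ|}
        ≤ P ((⋃ i ∈ Finset.range n, {ω | n < d i ω})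
            ∪ {ω | (n:ℝ) * μ / 4 ≤ |S ω - ∫ ω', S ω' ∂P|}) := measure_mono hincl
    _ ≤ P (⋃ i ∈ Finset.range n, {ω | n < d i ω})
        + P {ω | (n:ℝ) * μ / 4 ≤ |S ω - ∫ ω', S ω' ∂P|} := measure_union_le _ _
    _ ≤ ENNReal.ofReal ((n:ℝ) * tP)
        + ENNReal.ofReal (variance S P / ((n:ℝ) * μ / 4)^2) := add_le_add hPB hcheb
    _ = ENNReal.ofReal ((n:ℝ) * tP + variance S P / ((n:ℝ) * μ / 4)^2) := by
        rw [← ENNReal.ofReal_add (mul_nonneg (Nat.cast_nonneg n) htPnn)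
          (div_nonneg (variance_nonneg _ _) (by positivity))]
  -- real-number estimates
  have htP_le : (n:ℝ) * tP ≤ K1 * (n:ℝ) ^ (-(τ-2)) := by
    calc (n:ℝ) * tP ≤ (n:ℝ) * (K1 * (n:ℝ) ^ (-(τ-1))) :=
          mul_le_mul_of_nonneg_left (htailP n hn1) (by positivity)
    _ = K1 * ((n:ℝ) ^ (1:ℝ) * (n:ℝ) ^ (-(τ-1))) := by rw [Real.rpow_one]; ring
    _ = K1 * (n:ℝ) ^ (-(τ-2)) := by
        rw [← Real.rpow_add hn0R, show (1:ℝ) + -(τ-1) = -(τ-2) by ring]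
  have hVar_div : variance S P / ((n:ℝ) * μ / 4)^2 ≤ 16 * m2 / ((n:ℝ) * μlb^2) := by
    have hden : ((n:ℝ) * μlb / 4)^2 ≤ ((n:ℝ) * μ / 4)^2 := by
      refine pow_le_pow_left₀ (by positivity) ?_ 2
      have := mul_le_mul_of_nonneg_left hμ3 hn0R.le
      linarith
    calc variance S P / ((n:ℝ) * μ / 4)^2
        ≤ ((n:ℝ) * m2) / (((n:ℝ) * μlb / 4)^2) := by
          refine div_le_div₀ (by positivity) hVarS (by positivity) hden
    _ = 16 * m2 / ((n:ℝ) * μlb^2) := by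
        field_simp
        ring
  -- final case analysis
  have hofmono : ∀ {x y : ℝ}, x ≤ y → ENNReal.ofReal x ≤ ENNReal.ofReal y :=
    fun h => ENNReal.ofReal_le_ofReal h
  have hn2pow : (n:ℝ)^2 * (K1 * (n:ℝ) ^ (-(τ-1))) = K1 * (n:ℝ) ^ (3-τ) := by
    rw [show ((n:ℝ))^2 = (n:ℝ) ^ ((2:ℕ):ℝ) from (Real.rpow_natCast _ 2).symm]
    rw [mul_comm ((n:ℝ) ^ ((2:ℕ):ℝ)), mul_assoc, ← Real.rpow_add hn0R,
      show (-(τ-1)) + (((2:ℕ):ℝ)) = 3-τ by push_cast; ring]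
  refine ⟨?_, ?_, ?_⟩
  · -- case 2 < τ < 3
    intro hτ3
    have hhead3 : (∑ k ∈ Finset.range (n+1), (k:ℝ) ^ (2-τ)) ≤ (n:ℝ) ^ (3-τ) / (3-τ) := by
      have := pls_head_sum (c := 3-τ) (by linarith) (by linarith) n
      refine le_trans (le_of_eq ?_) this
      refine Finset.sum_congr rfl fun k _ => ?_
      congr 1
      ring
    have hm2f : m2 ≤ (C0/(3-τ) + K1) * (n:ℝ) ^ (3-τ) := by
      calc m2 ≤ C0 * ((n:ℝ) ^ (3-τ) / (3-τ)) + (n:ℝ)^2 * (K1 * (n:ℝ) ^ (-(τ-1))) :=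
            le_trans hm2_le (by
              refine add_le_add ?_ le_rfl
              exact mul_le_mul_of_nonneg_left hhead3 hC0pos.le)
      _ = (C0/(3-τ) + K1) * (n:ℝ) ^ (3-τ) := by rw [hn2pow]; ring
    refine le_trans hmain (hofmono ?_)
    have h16 : 16 * m2 / ((n:ℝ) * μlb^2)
        ≤ 16 * (C0/(3-τ) + K1) / μlb^2 * (n:ℝ) ^ (-(τ-2)) := by
      have hpow : (n:ℝ) ^ (3-τ) / (n:ℝ) = (n:ℝ) ^ (-(τ-2)) := by
        rw [eq_comm, show (-(τ-2) : ℝ) = (3-τ) + (-1) by ring, Real.rpow_add hn0R,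
          Real.rpow_neg_one, div_eq_mul_inv]
      calc 16 * m2 / ((n:ℝ) * μlb^2)
          ≤ 16 * ((C0/(3-τ) + K1) * (n:ℝ) ^ (3-τ)) / ((n:ℝ) * μlb^2) := by
            refine div_le_div_of_nonneg_right ?_ (by positivity)
            exact mul_le_mul_of_nonneg_left hm2f (by norm_num)
        _ = 16 * (C0/(3-τ) + K1) / μlb^2 * ((n:ℝ) ^ (3-τ) / (n:ℝ)) := by
            field_simp
        _ = 16 * (C0/(3-τ) + K1) / μlb^2 * (n:ℝ) ^ (-(τ-2)) := by rw [hpow]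
    calc (n:ℝ) * tP + variance S P / ((n:ℝ) * μ / 4)^2
        ≤ K1 * (n:ℝ) ^ (-(τ-2)) + 16 * (C0/(3-τ) + K1) / μlb^2 * (n:ℝ) ^ (-(τ-2)) := by
          have := le_trans hVar_div h16
          linarith [htP_le]
      _ = cA * (n:ℝ) ^ (-(τ-2)) := by rw [hcA_def]; ring
      _ ≤ max cA (max cB cC) * (n:ℝ) ^ (-(τ-2)) := by
          refine mul_le_mul_of_nonneg_right (le_max_left _ _) ?_
          positivity
  · -- case τ = 3
    intro hτ3
    have hlog1 : 1 ≤ Real.log n := by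
      rw [Real.le_log_iff_exp_le hn0R]
      calc Real.exp 1 ≤ 2.7182818286 := Real.exp_one_lt_d9.le
      _ ≤ 3 := by norm_num
      _ ≤ (n:ℝ) := hn3R
    have hlognn : (0:ℝ) ≤ Real.log n := by linarith
    have hhead3 : (∑ k ∈ Finset.range (n+1), (k:ℝ) ^ (2-τ)) ≤ 2 * Real.log n := by
      have h1 : (∑ k ∈ Finset.range (n+1), (k:ℝ) ^ (2-τ))
          = ∑ k ∈ Finset.range (n+1), (k:ℝ) ^ (-1:ℝ) := by
        refine Finset.sum_congr rfl fun k _ => ?_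
        rw [hτ3]
        norm_num
      rw [h1]
      calc (∑ k ∈ Finset.range (n+1), (k:ℝ) ^ (-1:ℝ)) ≤ 1 + Real.log n :=
            pls_head_sum_log hn1
      _ ≤ 2 * Real.log n := by linarith
    have hpow0 : (n:ℝ) ^ (3-τ) = 1 := by
      rw [hτ3, show (3:ℝ) - 3 = 0 by ring, Real.rpow_zero]
    have hm2f : m2 ≤ (2*C0 + K1) * Real.log n := by
      calc m2 ≤ C0 * (2*Real.log n) + (n:ℝ)^2 * (K1 * (n:ℝ)^(-(τ-1))) :=
            le_trans hm2_le (add_le_add (mul_le_mul_of_nonneg_left hhead3 hC0pos.le) le_rfl)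
      _ = C0 * (2*Real.log n) + K1 * (n:ℝ)^(3-τ) := by rw [hn2pow]
      _ = 2*C0*Real.log n + K1 := by rw [hpow0]; ring
      _ ≤ (2*C0 + K1) * Real.log n := by
          have h := mul_le_mul_of_nonneg_left hlog1 hK1pos.le
          have hexp : (2*C0 + K1) * Real.log n = 2*C0*Real.log n + K1 * Real.log n := by ring
          rw [hexp]
          linarith [h]
    refine le_trans hmain (hofmono ?_)
    have hpow1 : (n:ℝ) ^ (-(τ-2)) = 1/(n:ℝ) := by
      rw [hτ3, show (-(3-2:ℝ)) = -1 by norm_num, Real.rpow_neg_one, one_div]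
    calc (n:ℝ) * tP + variance S P / ((n:ℝ)*μ/4)^2
        ≤ K1 * (n:ℝ)^(-(τ-2)) + 16 * m2/((n:ℝ)*μlb^2) := add_le_add htP_le hVar_div
      _ ≤ K1 * (Real.log n / n) + 16 * ((2*C0+K1) * Real.log n)/((n:ℝ)*μlb^2) := by
          refine add_le_add ?_ ?_
          · rw [hpow1]
            refine mul_le_mul_of_nonneg_left ?_ hK1pos.le
            rw [div_le_div_iff₀ hn0R hn0R]
            have := mul_le_mul_of_nonneg_right hlog1 hn0R.le
            linarith
          · refine (div_le_div_iff_of_pos_right (by positivity)).mpr ?_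
            linarith [hm2f]
      _ = (K1 + 16*(2*C0+K1)/μlb^2) * Real.log n / n := by
          field_simp
      _ = cB * Real.log n / n := by rw [hcB_def]
      _ ≤ max cA (max cB cC) * Real.log n / n := by
          refine (div_le_div_iff_of_pos_right hn0R).mpr ?_
          refine mul_le_mul_of_nonneg_right ?_ hlognn
          exact le_trans (le_max_left _ _) (le_max_right _ _)
  · -- case 3 < τ
    intro hτ3
    have h2τ : (2-τ) < -1 := by linarith
    have hZ2s : Summable (fun k : ℕ => (k:ℝ)^(2-τ)) := Real.summable_nat_rpow.mpr h2τ
    have hhead3 : (∑ k ∈ Finset.range (n+1), (k:ℝ) ^ (2-τ)) ≤ Z2 := by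
      rw [hZ2_def]
      exact Summable.sum_le_tsum _ (fun k _ => Real.rpow_nonneg (Nat.cast_nonneg k) _) hZ2s
    have hpow1 : (n:ℝ) ^ (3-τ) ≤ 1 :=
      Real.rpow_le_one_of_one_le_of_nonpos hn1R (by linarith)
    have hZ2nn : 0 ≤ Z2 := by
      rw [hZ2_def]
      exact tsum_nonneg fun k => Real.rpow_nonneg (Nat.cast_nonneg k) _
    have hm2f : m2 ≤ C0*Z2 + K1 := by
      calc m2 ≤ C0 * Z2 + K1 * (n:ℝ)^(3-τ) := by
            refine le_trans hm2_le ?_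
            rw [hn2pow]
            exact add_le_add (mul_le_mul_of_nonneg_left hhead3 hC0pos.le) le_rfl
      _ ≤ C0*Z2 + K1 := by
          have := mul_le_mul_of_nonneg_left hpow1 hK1pos.le
          linarith
    have htP2 : (n:ℝ) * tP ≤ K1 / n := by
      refine le_trans htP_le ?_
      have hr : (n:ℝ)^(-(τ-2)) ≤ (n:ℝ)^(-1:ℝ) :=
        Real.rpow_le_rpow_of_exponent_le hn1R (by linarith)
      calc K1 * (n:ℝ)^(-(τ-2)) ≤ K1 * (n:ℝ)^(-1:ℝ) :=
            mul_le_mul_of_nonneg_left hr hK1pos.le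
      _ = K1 / n := by rw [Real.rpow_neg_one, div_eq_mul_inv]
    refine le_trans hmain (hofmono ?_)
    calc (n:ℝ) * tP + variance S P / ((n:ℝ)*μ/4)^2
        ≤ K1 / n + 16 * (C0*Z2 + K1)/((n:ℝ)*μlb^2) := by
          refine add_le_add htP2 (le_trans hVar_div ?_)
          refine (div_le_div_iff_of_pos_right (by positivity)).mpr ?_
          linarith [hm2f]
      _ = cC / n := by
          rw [hcC_def]
          field_simp
      _ ≤ max cA (max cB cC) / n := by
          refine (div_le_div_iff_of_pos_right hn0R).mpr ?_
          exact le_trans (le_max_right _ _) (le_max_right _ _)
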